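/- Let d ≥ 1, let q ∈ (1, 2] and let p = q/(q−1) ∈ [2, ∞) be its Hölder conjugate. Then for all β, β₀ ∈ ℝ^d: ‖β − β₀‖₂ + (∑_{j=1}^d |β_j|^p + 1)^{1/p} ≥ (∑_{j=1}^d |(β₀)_j|^p + 1)^{1/p}, with equality if and only if β = β₀. -/

import Mathlib

open Finset Real

/-- For `q ∈ (1,2]` with Hölder conjugate `p = q/(q−1) ∈ [2,∞)` and all
`β, β₀ ∈ ℝ^d`: `‖β−β₀‖₂ + (∑|βⱼ|^p + 1)^{1/p} ≥ (∑|(β₀)ⱼ|^p + 1)^{1/p}`, with equality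
iff `β = β₀`. -/
theorem stmt_12 (d : ℕ) (hd : 1 ≤ d) (q : ℝ) (hq1 : 1 < q) (hq2 : q ≤ 2)
    (p : ℝ) (hp : p = q / (q - 1)) (β β₀ : Fin d → ℝ) :
    ((∑ j, |β₀ j| ^ p) + 1) ^ (1 / p) ≤
      Real.sqrt (∑ j, (β j - β₀ j) ^ 2) + ((∑ j, |β j| ^ p) + 1) ^ (1 / p) ∧
    (((∑ j, |β₀ j| ^ p) + 1) ^ (1 / p) =
        Real.sqrt (∑ j, (β j - β₀ j) ^ 2) + ((∑ j, |β j| ^ p) + 1) ^ (1 / p) ↔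
      β = β₀) := by
  have hq0 : 0 < q - 1 := by linarith
  have hqne : q ≠ 0 := by positivity
  have hp1 : 1 < p := by
    rw [hp, lt_div_iff₀ hq0]; linarith
  have hp_pos : 0 < p := by linarith
  have hp2 : 2 ≤ p := by
    rw [hp, le_div_iff₀ hq0]; linarith
  have hconj : Real.HolderConjugate q p := by
    rw [Real.holderConjugate_iff]
    constructor
    · exact hq1
    · rw [hp]
      rw [inv_div]
      field_simp
      ring
  have hpq_mul : (p - 1) * q = p := by
    rw [hp]; field_simp; ring
  -- abbreviations
  set A := ∑ j, |β₀ j| ^ p with hA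
  set B := ∑ j, |β j| ^ p with hB
  set T := ∑ j, |β j - β₀ j| ^ p with hT
  set E := Real.sqrt (∑ j, (β j - β₀ j) ^ 2) with hE
  have hA0 : 0 ≤ A := sum_nonneg fun j _ => Real.rpow_nonneg (abs_nonneg _) _
  have hB0 : 0 ≤ B := sum_nonneg fun j _ => Real.rpow_nonneg (abs_nonneg _) _
  have hT0 : 0 ≤ T := sum_nonneg fun j _ => Real.rpow_nonneg (abs_nonneg _) _
  have hE0 : 0 ≤ E := Real.sqrt_nonneg _
  have hS2 : (0:ℝ) ≤ ∑ j, (β j - β₀ j) ^ 2 := sum_nonneg fun j _ => sq_nonneg _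
  -- splitting x^p = x^(p-1) * x for x ≥ 0
  have hsplit : ∀ x : ℝ, 0 ≤ x → x ^ p = x ^ (p - 1) * x := by
    intro x hx
    rcases hx.eq_or_lt with h | h
    · simp [← h, Real.zero_rpow hp_pos.ne']
    · have h2 := Real.rpow_add h (p - 1) 1
      rw [Real.rpow_one, sub_add_cancel] at h2
      exact h2
  -- ℓ^p ≤ ℓ^2 : T^(1/p) ≤ E
  have hTE : T ^ (1 / p) ≤ E := by
    have key : T ≤ E ^ p := by
      rcases hE0.eq_or_lt with hEz | hEp
      · have hz : ∀ j : Fin d, β j - β₀ j = 0 := by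
          intro j
          have h2 : (∑ j, (β j - β₀ j) ^ 2) = 0 := by
            have := Real.sqrt_eq_zero hS2 |>.mp hEz.symm
            exact this
          have := (Finset.sum_eq_zero_iff_of_nonneg (fun j _ => sq_nonneg (β j - β₀ j))).mp h2
            j (mem_univ j)
          exact pow_eq_zero_iff (n := 2) (by norm_num) |>.mp this
        have : T = 0 := by
          rw [hT]
          apply Finset.sum_eq_zero
          intro j _
          rw [hz j]
          simp [Real.zero_rpow hp_pos.ne']
        rw [this, ← hEz, Real.zero_rpow hp_pos.ne']
      · have habs : ∀ j : Fin d, |β j - β₀ j| ≤ E := by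
          intro j
          rw [hE, ← Real.sqrt_sq_eq_abs]
          exact Real.sqrt_le_sqrt (Finset.single_le_sum (f := fun i => (β i - β₀ i) ^ 2) (fun i _ => sq_nonneg _) (mem_univ j))
        have hterm : ∀ j : Fin d, |β j - β₀ j| ^ p ≤ (β j - β₀ j) ^ 2 * E ^ (p - 2) := by
          intro j
          rcases eq_or_ne (β j - β₀ j) 0 with h | h
          · rw [h]
            simp only [abs_zero, Real.zero_rpow hp_pos.ne']
            positivity
          · have h0 : 0 < |β j - β₀ j| := abs_pos.mpr h
            calc |β j - β₀ j| ^ p = |β j - β₀ j| ^ (2:ℝ) * |β j - β₀ j| ^ (p - 2) := by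
                  rw [← Real.rpow_add h0]; ring_nf
              _ ≤ |β j - β₀ j| ^ (2:ℝ) * E ^ (p - 2) :=
                  mul_le_mul_of_nonneg_left
                    (Real.rpow_le_rpow (abs_nonneg _) (habs j) (by linarith))
                    (by positivity)
              _ = (β j - β₀ j) ^ 2 * E ^ (p - 2) := by
                  rw [Real.rpow_two, sq_abs]
        calc T ≤ ∑ j, (β j - β₀ j) ^ 2 * E ^ (p - 2) := Finset.sum_le_sum fun j _ => hterm j
          _ = (∑ j, (β j - β₀ j) ^ 2) * E ^ (p - 2) := by rw [← Finset.sum_mul]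
          _ = E ^ (2:ℝ) * E ^ (p - 2) := by rw [Real.rpow_two, hE, Real.sq_sqrt hS2]
          _ = E ^ p := by rw [← Real.rpow_add hEp]; ring_nf
    calc T ^ (1/p) ≤ (E ^ p) ^ (1/p) := Real.rpow_le_rpow hT0 key (by positivity)
      _ = E := by rw [← Real.rpow_mul hE0, mul_one_div, div_self hp_pos.ne', Real.rpow_one]
  -- Hölder on the difference
  have hH1 : ∑ j, |β₀ j| ^ (p-1) * |β j - β₀ j| ≤ A ^ (1/q) * T ^ (1/p) := by
    have := Real.inner_le_Lp_mul_Lq_of_nonneg (univ : Finset (Fin d)) hconj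
      (f := fun j => |β₀ j| ^ (p-1)) (g := fun j => |β j - β₀ j|)
      (fun j _ => Real.rpow_nonneg (abs_nonneg _) _) (fun j _ => abs_nonneg _)
    have hrw : ∀ x : ℝ, (|x| ^ (p-1)) ^ q = |x| ^ p := fun x => by
      rw [← Real.rpow_mul (abs_nonneg _), hpq_mul]
    simp only [hrw] at this
    exact this
  -- Hölder on the augmented vectors
  have hH2 : (∑ j, |β₀ j| ^ (p-1) * |β j|) + 1 ≤ (A+1) ^ (1/q) * (B+1) ^ (1/p) := by
    have := Real.inner_le_Lp_mul_Lq_of_nonneg (univ : Finset (Fin (d+1))) hconj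
      (f := Fin.snoc (fun j => |β₀ j| ^ (p-1)) (1:ℝ))
      (g := Fin.snoc (fun j => |β j|) (1:ℝ))
      (fun i _ => by
        induction i using Fin.lastCases with
        | last => simp
        | cast j => simp [Real.rpow_nonneg (abs_nonneg _)])
      (fun i _ => by
        induction i using Fin.lastCases with
        | last => simp
        | cast j => simp)
    have hrw : ∀ x : ℝ, (|x| ^ (p-1)) ^ q = |x| ^ p := fun x => by
      rw [← Real.rpow_mul (abs_nonneg _), hpq_mul]
    rw [Fin.sum_univ_castSucc, Fin.sum_univ_castSucc, Fin.sum_univ_castSucc] at this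
    simp only [Fin.snoc_castSucc, Fin.snoc_last, mul_one, Real.one_rpow, hrw] at this
    exact this
  -- triangle inequality per coordinate
  have htri : A + 1 ≤ ((∑ j, |β₀ j| ^ (p-1) * |β j|) + 1) + ∑ j, |β₀ j| ^ (p-1) * |β j - β₀ j| := by
    have : A ≤ (∑ j, |β₀ j| ^ (p-1) * |β j|) + ∑ j, |β₀ j| ^ (p-1) * |β j - β₀ j| := by
      rw [← Finset.sum_add_distrib, hA]
      apply Finset.sum_le_sum
      intro j _
      rw [hsplit _ (abs_nonneg (β₀ j)), ← mul_add]
      apply mul_le_mul_of_nonneg_left _ (Real.rpow_nonneg (abs_nonneg _) _)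
      calc |β₀ j| = |β j - (β j - β₀ j)| := by ring_nf
        _ ≤ |β j| + |β j - β₀ j| := abs_sub _ _
    linarith
  -- combine
  have hQ0 : (0:ℝ) < (A+1) ^ (1/q) := Real.rpow_pos_of_pos (by linarith) _
  set c : ℝ := A ^ (1/q) / (A+1) ^ (1/q) with hc
  have hc0 : 0 ≤ c := by positivity
  have hc1 : c < 1 := by
    rw [hc, div_lt_one hQ0]
    exact Real.rpow_lt_rpow hA0 (by linarith) (by positivity)
  have hmul : (A+1) ^ (1/q) * ((A+1) ^ (1/p)) = A + 1 := by
    rw [← Real.rpow_add (by linarith : (0:ℝ) < A + 1)]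
    rw [show 1/q + 1/p = 1 by
      have := hconj.inv_add_inv_eq_one
      rw [one_div, one_div]; linarith]
    exact Real.rpow_one _
  have hmain : (A+1) ^ (1/p) ≤ (B+1) ^ (1/p) + c * T ^ (1/p) := by
    rw [← mul_le_mul_iff_right₀ hQ0, mul_add, hmul]
    have hcQ : (A+1) ^ (1/q) * (c * T ^ (1/p)) = A ^ (1/q) * T ^ (1/p) := by
      rw [hc]; field_simp
    rw [hcQ]
    calc A + 1 ≤ ((∑ j, |β₀ j| ^ (p-1) * |β j|) + 1) + ∑ j, |β₀ j| ^ (p-1) * |β j - β₀ j| := htri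
      _ ≤ (A+1) ^ (1/q) * (B+1) ^ (1/p) + A ^ (1/q) * T ^ (1/p) := add_le_add hH2 hH1
  have hTp0 : 0 ≤ T ^ (1/p) := Real.rpow_nonneg hT0 _
  have hineq : (A+1) ^ (1/p) ≤ E + (B+1) ^ (1/p) := by
    have h1 : c * T ^ (1/p) ≤ T ^ (1/p) := by
      nlinarith
    linarith
  refine ⟨hineq, ?_, ?_⟩
  · -- equality implies β = β₀
    intro heq
    by_contra hne
    have hEpos : 0 < E := by
      rw [hE, Real.sqrt_pos]
      obtain ⟨j, hj⟩ := Function.ne_iff.mp hne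
      have : 0 < (β j - β₀ j) ^ 2 := by
        have : β j - β₀ j ≠ 0 := sub_ne_zero.mpr hj
        positivity
      exact this.trans_le (Finset.single_le_sum (f := fun i => (β i - β₀ i) ^ 2) (fun i _ => sq_nonneg _) (mem_univ j))
    have h1 : c * T ^ (1/p) ≤ c * E := mul_le_mul_of_nonneg_left hTE hc0
    have h2 : c * E < E := by nlinarith
    linarith
  · -- β = β₀ implies equality
    intro heq
    subst heq
    simp only [hE, sub_self]
    simp
    rw [hA, hB]
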